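/- Let γ be a translation-invariant monotonicity-preserving specification, μ± = lim_{Λ↑𝕃} γ_Λ(·|±), and suppose μ⁻_{Λ_M∖Λ} ≪ μ⁺_{Λ_M∖Λ} with density g_{Λ_M∖Λ} = dμ⁻_{Λ_M∖Λ}/dμ⁺_{Λ_M∖Λ}, where Λ ⊂ Λ_M are finite. Then for every increasing local function f: 0 ≤ μ⁺[ g_{Λ_M∖Λ} (γ^{M,+}_Λ(f) − γ_Λ(f)) ] ≤ μ⁻( |γ^{M,+}_Λ(f) − γ_Λ(f)| ), where γ^{M,+}_Λ(f)(ω) = γ_Λ(f | ω_{Λ_M} +_{𝕃∖Λ_M}). -/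

import Mathlib

open MeasureTheory Filter Topology
open scoped ENNReal MeasureTheory Classical

noncomputable section

/-- The σ-algebra on configuration space generated by the coordinates in `Δ`. -/
def cylinderSigma (Ω₀ : Type*) [MeasurableSpace Ω₀] {ι : Type*} (Δ : Set ι) :
    MeasurableSpace (ι → Ω₀) :=
  MeasurableSpace.comap (fun ω (x : Δ) => ω (x : ι)) MeasurableSpace.pi

/-- The configuration agreeing with `ω` on `S` and with `θ` off `S`. -/
def splice {ι Ω₀ : Type*} (S : Set ι) (ω θ : ι → Ω₀) : ι → Ω₀ :=
  fun x => if x ∈ S then ω x else θ x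

/-- A function is local if it is measurable with respect to a finite cylinder σ-algebra. -/
def IsLocal {ι Ω₀ : Type*} [MeasurableSpace Ω₀] (f : (ι → Ω₀) → ℝ) : Prop :=
  ∃ Δ : Finset ι, Measurable[cylinderSigma Ω₀ (Δ : Set ι)] f

/-- Quasilocality of `f` in the direction `θ`. -/
def QuasilocalInDir {ι Ω₀ : Type*} (θ : ι → Ω₀) (f : (ι → Ω₀) → ℝ) : Prop :=
  ∀ ω, Tendsto (fun S : Finset ι => f (splice (S : Set ι) ω θ)) atTop (𝓝 (f ω))

/-- `f` is quasilocal: a uniform limit of local functions. -/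
def IsQuasilocal {ι Ω₀ : Type*} [MeasurableSpace Ω₀] (f : (ι → Ω₀) → ℝ) : Prop :=
  ∀ ε : ℝ, 0 < ε → ∃ g, IsLocal g ∧ ∀ ω, |f ω - g ω| ≤ ε

/-- A specification: a proper consistent family of probability kernels indexed by
finite subsets of the site space. -/
structure Specification (ι Ω₀ : Type*) [MeasurableSpace Ω₀] where
  k : Finset ι → (ι → Ω₀) → Measure (ι → Ω₀)
  isProb : ∀ Λ ω, IsProbabilityMeasure (k Λ ω)
  meas : ∀ (Λ : Finset ι) (A : Set (ι → Ω₀)), MeasurableSet A →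
    Measurable[cylinderSigma Ω₀ ((Λ : Set ι))ᶜ] (fun ω => k Λ ω A)
  proper : ∀ (Λ : Finset ι) (B : Set (ι → Ω₀)),
    MeasurableSet[cylinderSigma Ω₀ ((Λ : Set ι))ᶜ] B → ∀ ω, k Λ ω B = B.indicator 1 ω
  consistent : ∀ ⦃Λ Λ' : Finset ι⦄, Λ ⊆ Λ' → ∀ ω, (k Λ' ω).bind (k Λ) = k Λ' ω

/-- `γ_Λ f`, the expectation of `f` under the kernel of the specification. -/
def specInt {ι Ω₀ : Type*} [MeasurableSpace Ω₀] (γ : Specification ι Ω₀)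
    (Λ : Finset ι) (f : (ι → Ω₀) → ℝ) (ω : ι → Ω₀) : ℝ :=
  ∫ x, f x ∂(γ.k Λ ω)

/-- DLR consistency of a measure with a specification. -/
def IsGibbs {ι Ω₀ : Type*} [MeasurableSpace Ω₀] (γ : Specification ι Ω₀)
    (μ : Measure (ι → Ω₀)) : Prop :=
  ∀ Λ, μ.bind (γ.k Λ) = μ

/-- A specification is quasilocal in the direction `θ`. -/
def SpecQuasilocalInDir {ι Ω₀ : Type*} [MeasurableSpace Ω₀] (γ : Specification ι Ω₀)
    (θ : ι → Ω₀) : Prop :=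
  ∀ Λ f, IsLocal f → QuasilocalInDir θ (specInt γ Λ f)

/-- A quasilocal specification. -/
def IsSpecQuasilocal {ι Ω₀ : Type*} [MeasurableSpace Ω₀] (γ : Specification ι Ω₀) : Prop :=
  ∀ Λ f, IsLocal f → IsQuasilocal (specInt γ Λ f)

/-- A monotonicity-preserving specification. -/
def MonoPreserving {ι Ω₀ : Type*} [MeasurableSpace Ω₀] [Preorder Ω₀]
    (γ : Specification ι Ω₀) : Prop :=
  ∀ Λ (f : (ι → Ω₀) → ℝ), Measurable f → Monotone f → Monotone (specInt γ Λ f)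

/-- `γ'` is the limit of `γ` with boundary condition forced to `θ` outside larger
and larger volumes. -/
def IsDirLimitSpec {ι Ω₀ : Type*} [MeasurableSpace Ω₀] (γ γ' : Specification ι Ω₀)
    (θ : ι → Ω₀) : Prop :=
  ∀ Λ f, IsLocal f → ∀ ω,
    Tendsto (fun S : Finset ι => specInt γ Λ f (splice (S : Set ι) ω θ)) atTop
      (𝓝 (specInt γ' Λ f ω))

/-- `μ` is the weak limit `lim_{Λ↑𝕃} γ_Λ(⬝|θ)`. -/
def IsLimitWithBoundary {ι Ω₀ : Type*} [MeasurableSpace Ω₀] (γ : Specification ι Ω₀)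
    (θ : ι → Ω₀) (μ : Measure (ι → Ω₀)) : Prop :=
  IsProbabilityMeasure μ ∧
    ∀ f, IsLocal f → Tendsto (fun Λ : Finset ι => specInt γ Λ f θ) atTop (𝓝 (∫ ω, f ω ∂μ))

/-- The set of configurations at which all the `γ_Λ f` (`f` local) are continuous. -/
def contSet {ι Ω₀ : Type*} [MeasurableSpace Ω₀] [TopologicalSpace Ω₀]
    (γ : Specification ι Ω₀) : Set (ι → Ω₀) :=
  {ω | ∀ Λ f, IsLocal f → ContinuousAt (specInt γ Λ f) ω}

/-- An almost quasilocal probability measure. -/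
def AlmostQuasilocal {ι Ω₀ : Type*} [MeasurableSpace Ω₀] [TopologicalSpace Ω₀]
    (μ : Measure (ι → Ω₀)) : Prop :=
  ∃ γ : Specification ι Ω₀, IsGibbs γ μ ∧ μ (contSet γ) = 1

/-- Sites of the lattice `ℤ^d`. -/
abbrev Site (d : ℕ) := Fin d → ℤ

/-- The cube `Λ_n = ([-n,n] ∩ ℤ)^d`. -/
def cube (d : ℕ) (n : ℕ) : Finset (Site d) :=
  Fintype.piFinset fun _ => Finset.Icc (-(n : ℤ)) (n : ℤ)

/-- Translation of a configuration by `i`. -/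
def shift {Ω₀ : Type*} {d : ℕ} (i : Site d) (ω : Site d → Ω₀) : Site d → Ω₀ :=
  fun x => ω (x - i)

/-- Translation invariance of a measure. -/
def TransInv {Ω₀ : Type*} [MeasurableSpace Ω₀] {d : ℕ} (μ : Measure (Site d → Ω₀)) : Prop :=
  ∀ i : Site d, μ.map (shift i) = μ

/-- Translation invariance of a specification. -/
def TransInvSpec {Ω₀ : Type*} [MeasurableSpace Ω₀] {d : ℕ}
    (γ : Specification (Site d) Ω₀) : Prop :=
  ∀ (i : Site d) (Λ : Finset (Site d)) (ω),
    γ.k (Λ.image (· + i)) (shift i ω) = (γ.k Λ ω).map (shift i)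

/-- Restriction (projection) of a measure to the coordinates in `Δ`. -/
def restrictTo {ι Ω₀ : Type*} [MeasurableSpace Ω₀] (Δ : Finset ι)
    (μ : Measure (ι → Ω₀)) : Measure ({x // x ∈ Δ} → Ω₀) :=
  μ.map (fun ω (x : {x // x ∈ Δ}) => ω (x : ι))

/-- The Radon–Nikodym density `dμ_Δ/dν_Δ`, viewed as a function on configuration space. -/
def density {ι Ω₀ : Type*} [MeasurableSpace Ω₀] (Δ : Finset ι)
    (μ ν : Measure (ι → Ω₀)) : (ι → Ω₀) → ℝ :=
  fun ω => ((restrictTo Δ μ).rnDeriv (restrictTo Δ ν) (fun x : {x // x ∈ Δ} => ω (x : ι))).toReal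

/-- Relative entropy `H_Δ(μ|ν)` at the finite volume `Δ` (`+∞` if `μ_Δ` is not
absolutely continuous with respect to `ν_Δ`). -/
def relEnt {ι Ω₀ : Type*} [MeasurableSpace Ω₀] (Δ : Finset ι)
    (μ ν : Measure (ι → Ω₀)) : ℝ≥0∞ :=
  if restrictTo Δ μ ≪ restrictTo Δ ν then
    ENNReal.ofReal (∫ ω, density Δ μ ν ω * Real.log (density Δ μ ν ω) ∂ν)
  else ⊤

/-- Vanishing relative entropy density: `h(μ|ν) = 0`. -/
def EntDensityZero {Ω₀ : Type*} [MeasurableSpace Ω₀] {d : ℕ}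
    (μ ν : Measure (Site d → Ω₀)) : Prop :=
  Tendsto (fun n => relEnt (cube d n) μ ν / ((cube d n).card : ℝ≥0∞)) atTop (𝓝 0)

namespace PBD

open MeasureTheory Filter Topology

variable {ι : Type*} {Ω₀ : Type*} [MeasurableSpace Ω₀]

lemma measurable_proj (S : Set ι) :
    Measurable[cylinderSigma Ω₀ S] (fun ω (x : S) => ω (x : ι)) :=
  fun _s hs => ⟨_, hs, rfl⟩

lemma cylinderSigma_le (S : Set ι) :
    cylinderSigma Ω₀ S ≤ (inferInstance : MeasurableSpace (ι → Ω₀)) := by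
  rintro s ⟨t, ht, rfl⟩
  exact measurable_pi_lambda _ (fun x => measurable_pi_apply _) ht

lemma IsLocal.measurable' {f : (ι → Ω₀) → ℝ} (hf : IsLocal f) : Measurable f := by
  obtain ⟨Δ, hΔ⟩ := hf
  exact hΔ.mono (cylinderSigma_le _) le_rfl

lemma eq_of_agree {β : Type*} [MeasurableSpace β] [MeasurableSingletonClass β]
    {S : Set ι} {φ : (ι → Ω₀) → β} (hφ : Measurable[cylinderSigma Ω₀ S] φ)
    {ω ω' : ι → Ω₀} (h : ∀ x ∈ S, ω x = ω' x) : φ ω = φ ω' := by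
  obtain ⟨t, -, ht⟩ := hφ (measurableSet_singleton (φ ω))
  have hproj : (fun (x : S) => ω (x : ι)) = fun (x : S) => ω' (x : ι) := by
    funext x; exact h x x.2
  have hω : (fun (x : S) => ω (x : ι)) ∈ t := by
    have hmem : ω ∈ φ ⁻¹' {φ ω} := rfl
    rw [← ht] at hmem; exact hmem
  have hω' : ω' ∈ φ ⁻¹' {φ ω} := by
    rw [← ht]; show (fun (x : S) => ω' (x : ι)) ∈ t; rw [← hproj]; exact hω
  exact (Set.mem_singleton_iff.mp hω').symm

lemma kernel_eq_of_agree (γ : Specification ι Ω₀) (Λ : Finset ι) {ω ω' : ι → Ω₀}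
    (h : ∀ x ∈ ((Λ : Set ι))ᶜ, ω x = ω' x) : γ.k Λ ω = γ.k Λ ω' :=
  Measure.ext fun A hA => eq_of_agree (γ.meas Λ A hA) h

lemma specInt_eq_of_agree (γ : Specification ι Ω₀) (Λ : Finset ι) (φ : (ι → Ω₀) → ℝ)
    {ω ω' : ι → Ω₀} (h : ∀ x ∈ ((Λ : Set ι))ᶜ, ω x = ω' x) :
    specInt γ Λ φ ω = specInt γ Λ φ ω' := by
  unfold specInt; rw [kernel_eq_of_agree γ Λ h]

lemma measurableSet_singleton_pi {α : Type*} [Countable α] [MeasurableSingletonClass Ω₀]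
    (b : α → Ω₀) : MeasurableSet {b} := by
  have hset : {b} = ⋂ x, (fun (v : α → Ω₀) => v x) ⁻¹' {b x} := by
    ext v
    simp only [Set.mem_singleton_iff, Set.mem_iInter, Set.mem_preimage, funext_iff]
  rw [hset]
  exact MeasurableSet.iInter fun x => (measurable_pi_apply x) (measurableSet_singleton _)

instance {α : Type*} [Countable α] [MeasurableSingletonClass Ω₀] :
    MeasurableSingletonClass (α → Ω₀) :=
  ⟨measurableSet_singleton_pi⟩

/-- A function depending only on finitely many coordinates is cylinder-measurable. -/
lemma measurable_cylinder_of_depends [MeasurableSingletonClass Ω₀] [Countable Ω₀] [Nonempty Ω₀]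
    (E : Finset ι) {φ : (ι → Ω₀) → ℝ}
    (h : ∀ ω ω' : ι → Ω₀, (∀ x ∈ E, ω x = ω' x) → φ ω = φ ω') :
    Measurable[cylinderSigma Ω₀ (E : Set ι)] φ := by
  classical
  haveI : Finite ((E : Set ι) : Set ι).Elem := E.finite_toSet.to_subtype
  set ext : (((E : Set ι)) → Ω₀) → (ι → Ω₀) := fun b x =>
    if hx : x ∈ (E : Set ι) then b ⟨x, hx⟩ else Classical.arbitrary Ω₀ with hext
  have hφ : φ = (fun b => φ (ext b)) ∘ (fun ω (x : (E : Set ι)) => ω (x : ι)) := by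
    funext ω
    refine h ω _ (fun x hx => ?_)
    simp only [hext, Function.comp_apply]
    rw [dif_pos (by simpa using hx)]
  rw [hφ]
  exact (measurable_of_countable _).comp (measurable_proj _)

lemma isLocal_of_depends [MeasurableSingletonClass Ω₀] [Countable Ω₀] [Nonempty Ω₀]
    (E : Finset ι) {φ : (ι → Ω₀) → ℝ}
    (h : ∀ ω ω' : ι → Ω₀, (∀ x ∈ E, ω x = ω' x) → φ ω = φ ω') : IsLocal φ :=
  ⟨E, measurable_cylinder_of_depends E h⟩

lemma finiteRange_of_depends [Finite Ω₀] [Nonempty Ω₀] (E : Finset ι) {φ : (ι → Ω₀) → ℝ}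
    (h : ∀ ω ω' : ι → Ω₀, (∀ x ∈ E, ω x = ω' x) → φ ω = φ ω') :
    (Set.range φ).Finite := by
  classical
  haveI : Finite ((E : Set ι) : Set ι).Elem := E.finite_toSet.to_subtype
  set ext : (((E : Set ι)) → Ω₀) → (ι → Ω₀) := fun b x =>
    if hx : x ∈ (E : Set ι) then b ⟨x, hx⟩ else Classical.arbitrary Ω₀ with hext
  have hsub : Set.range φ ⊆ Set.range (fun b => φ (ext b)) := by
    rintro - ⟨ω, rfl⟩
    refine ⟨fun x : (E : Set ι) => ω (x : ι), ?_⟩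
    refine (h ω _ (fun x hx => ?_)).symm
    simp only [hext]
    rw [dif_pos (by simpa using hx)]
  exact (Set.finite_range _).subset hsub

lemma exists_bound_of_finiteRange [Nonempty Ω₀] {φ : (ι → Ω₀) → ℝ}
    (h : (Set.range φ).Finite) : ∃ C : ℝ, 0 ≤ C ∧ ∀ ω, |φ ω| ≤ C := by
  classical
  set s : Finset ℝ := (h.image abs).toFinset with hs
  have hmem : ∀ ω, |φ ω| ∈ s := by
    intro ω
    simp only [hs, Set.Finite.mem_toFinset]
    exact Set.mem_image_of_mem _ (Set.mem_range_self _)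
  have hne : s.Nonempty := ⟨_, hmem (Classical.arbitrary _)⟩
  refine ⟨s.max' hne, ?_, fun ω => s.le_max' _ (hmem ω)⟩
  exact le_trans (abs_nonneg (φ (Classical.arbitrary _))) (s.le_max' _ (hmem _))

lemma integrable_of_bound {α : Type*} [MeasurableSpace α] (μ : Measure α) [IsFiniteMeasure μ]
    {φ : α → ℝ} (hm : AEStronglyMeasurable φ μ) {C : ℝ} (hb : ∀ x, |φ x| ≤ C) :
    Integrable φ μ :=
  (integrable_const C).mono' hm (Filter.Eventually.of_forall fun x => by
    simpa [Real.norm_eq_abs] using hb x)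

lemma abs_specInt_le (γ : Specification ι Ω₀) (Λ : Finset ι) {φ : (ι → Ω₀) → ℝ} {C : ℝ}
    (hb : ∀ x, |φ x| ≤ C) (ω : ι → Ω₀) : |specInt γ Λ φ ω| ≤ C := by
  haveI := γ.isProb Λ ω
  calc |specInt γ Λ φ ω| = ‖∫ x, φ x ∂(γ.k Λ ω)‖ := (Real.norm_eq_abs _).symm
    _ ≤ C * ((γ.k Λ ω) Set.univ).toReal :=
      norm_integral_le_of_norm_le_const (Filter.Eventually.of_forall fun x => by
        simpa [Real.norm_eq_abs] using hb x)
    _ = C := by simp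

end PBD
namespace PBD
open MeasureTheory Filter Topology
set_option linter.unusedSectionVars false

variable {ι : Type*} {Ω₀ : Type*} [MeasurableSpace Ω₀]

lemma specInt_repr (γ : Specification ι Ω₀) (Λ : Finset ι) {φ : (ι → Ω₀) → ℝ}
    (hm : Measurable φ) (hr : (Set.range φ).Finite) (ω : ι → Ω₀) :
    specInt γ Λ φ ω = ∑ c ∈ hr.toFinset, c * ((γ.k Λ ω) (φ ⁻¹' {c})).toReal := by
  classical
  haveI := γ.isProb Λ ω
  have hdecomp : φ = fun x => ∑ c ∈ hr.toFinset, Set.indicator (φ ⁻¹' {c}) (fun _ => c) x := by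
    funext x
    rw [Finset.sum_eq_single (φ x)]
    · simp [Set.indicator_apply]
    · intro c _ hne
      rw [Set.indicator_of_notMem]
      simpa using fun hx => hne hx.symm
    · intro hx
      exact absurd (hr.mem_toFinset.2 (Set.mem_range_self x)) hx
  have hint : ∀ c ∈ hr.toFinset,
      Integrable (fun x => Set.indicator (φ ⁻¹' {c}) (fun _ => c) x) (γ.k Λ ω) := by
    intro c _
    exact (integrable_const c).indicator (hm (measurableSet_singleton c))
  calc specInt γ Λ φ ω
      = ∫ x, ∑ c ∈ hr.toFinset, Set.indicator (φ ⁻¹' {c}) (fun _ => c) x ∂(γ.k Λ ω) := by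
        unfold specInt; conv_lhs => rw [hdecomp]
    _ = ∑ c ∈ hr.toFinset, ∫ x, Set.indicator (φ ⁻¹' {c}) (fun _ => c) x ∂(γ.k Λ ω) :=
        integral_finset_sum _ hint
    _ = ∑ c ∈ hr.toFinset, c * ((γ.k Λ ω) (φ ⁻¹' {c})).toReal := by
        refine Finset.sum_congr rfl fun c _ => ?_
        rw [integral_indicator_const c (hm (measurableSet_singleton c))]
        simp [mul_comm, Measure.real]

lemma measurable_specInt (γ : Specification ι Ω₀) (Λ : Finset ι) {φ : (ι → Ω₀) → ℝ}
    (hm : Measurable φ) (hr : (Set.range φ).Finite) :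
    Measurable (specInt γ Λ φ) := by
  have hrw : specInt γ Λ φ = fun ω => ∑ c ∈ hr.toFinset, c * ((γ.k Λ ω) (φ ⁻¹' {c})).toReal :=
    funext (specInt_repr γ Λ hm hr)
  rw [hrw]
  refine Finset.measurable_sum _ fun c _ => ?_
  exact measurable_const.mul
    (((γ.meas Λ _ (hm (measurableSet_singleton c))).mono (cylinderSigma_le _) le_rfl).ennreal_toReal)

lemma measurable_kernel (γ : Specification ι Ω₀) (S : Finset ι) : Measurable (γ.k S) :=
  Measure.measurable_of_measurable_coe _ fun A hA =>
    (γ.meas S A hA).mono (cylinderSigma_le _) le_rfl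

lemma specInt_bind (γ : Specification ι Ω₀) {S W : Finset ι} (hSW : S ⊆ W) {φ : (ι → Ω₀) → ℝ}
    (hm : Measurable φ) (hr : (Set.range φ).Finite) (η : ι → Ω₀) :
    specInt γ W φ η = ∫ ω, specInt γ S φ ω ∂(γ.k W η) := by
  classical
  haveI := γ.isProb W η
  have key : ∀ A : Set (ι → Ω₀), MeasurableSet A →
      ((γ.k W η) A).toReal = ∫ ω, ((γ.k S ω) A).toReal ∂(γ.k W η) := by
    intro A hA
    have hlin : (γ.k W η) A = ∫⁻ ω, (γ.k S ω) A ∂(γ.k W η) := by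
      conv_lhs => rw [← γ.consistent hSW η]
      exact Measure.bind_apply hA (measurable_kernel γ S).aemeasurable
    rw [hlin, ← integral_toReal]
    · exact (((γ.meas S A hA).mono (cylinderSigma_le _) le_rfl).aemeasurable)
    · refine Filter.Eventually.of_forall fun ω => ?_
      haveI := γ.isProb S ω
      exact measure_lt_top _ _
  have hintS : ∀ c ∈ hr.toFinset,
      Integrable (fun ω => c * ((γ.k S ω) (φ ⁻¹' {c})).toReal) (γ.k W η) := by
    intro c _
    refine integrable_of_bound _ ?_ (C := |c|) fun ω => ?_
    · exact (measurable_const.mul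
        (((γ.meas S _ (hm (measurableSet_singleton c))).mono (cylinderSigma_le _)
          le_rfl).ennreal_toReal)).aestronglyMeasurable
    · haveI := γ.isProb S ω
      rw [abs_mul]
      have h1 : ((γ.k S ω) (φ ⁻¹' {c})).toReal ≤ 1 := by
        rw [← ENNReal.toReal_one]
        exact ENNReal.toReal_mono (by simp) prob_le_one
      have h0 : (0:ℝ) ≤ ((γ.k S ω) (φ ⁻¹' {c})).toReal := ENNReal.toReal_nonneg
      calc |c| * |((γ.k S ω) (φ ⁻¹' {c})).toReal| = |c| * ((γ.k S ω) (φ ⁻¹' {c})).toReal := by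
            rw [abs_of_nonneg h0]
        _ ≤ |c| * 1 := by
            exact mul_le_mul_of_nonneg_left h1 (abs_nonneg c)
        _ = |c| := mul_one _
  calc specInt γ W φ η = ∑ c ∈ hr.toFinset, c * ((γ.k W η) (φ ⁻¹' {c})).toReal :=
        specInt_repr γ W hm hr η
    _ = ∑ c ∈ hr.toFinset, c * ∫ ω, ((γ.k S ω) (φ ⁻¹' {c})).toReal ∂(γ.k W η) := by
        refine Finset.sum_congr rfl fun c _ => ?_
        rw [key _ (hm (measurableSet_singleton c))]
    _ = ∑ c ∈ hr.toFinset, ∫ ω, c * ((γ.k S ω) (φ ⁻¹' {c})).toReal ∂(γ.k W η) := by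
        refine Finset.sum_congr rfl fun c _ => ?_
        exact (integral_const_mul c _).symm
    _ = ∫ ω, ∑ c ∈ hr.toFinset, c * ((γ.k S ω) (φ ⁻¹' {c})).toReal ∂(γ.k W η) :=
        (integral_finset_sum _ hintS).symm
    _ = ∫ ω, specInt γ S φ ω ∂(γ.k W η) := by
        refine integral_congr_ae (Filter.Eventually.of_forall fun ω => ?_)
        rw [specInt_repr γ S hm hr ω]

lemma specInt_indicator_pullout (γ : Specification ι Ω₀) (S : Finset ι) {A : Set (ι → Ω₀)}
    (hA : MeasurableSet A) (hAc : MeasurableSet[cylinderSigma Ω₀ ((S : Set ι))ᶜ] A)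
    (χ : (ι → Ω₀) → ℝ) (ω : ι → Ω₀) :
    specInt γ S (A.indicator χ) ω = A.indicator (specInt γ S χ) ω := by
  haveI := γ.isProb S ω
  have hk := γ.proper S A hAc ω
  by_cases hω : ω ∈ A
  · have h1 : (γ.k S ω) A = 1 := by rw [hk, Set.indicator_of_mem hω]; rfl
    have h0 : (γ.k S ω) Aᶜ = 0 := by
      have hc := measure_compl hA (measure_ne_top (γ.k S ω) A)
      rw [h1, measure_univ] at hc
      simpa using hc
    have hAae : ∀ᵐ x ∂(γ.k S ω), x ∈ A := by
      rw [ae_iff]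
      exact h0
    have hae : A.indicator χ =ᵐ[γ.k S ω] χ := by
      filter_upwards [hAae] with x hx
      exact Set.indicator_of_mem hx χ
    rw [Set.indicator_of_mem hω]
    exact integral_congr_ae hae
  · have h0 : (γ.k S ω) A = 0 := by
      rw [hk, Set.indicator_of_notMem hω]
    have hAae : ∀ᵐ x ∂(γ.k S ω), x ∉ A := by
      rw [ae_iff]
      simpa using h0
    have hae : A.indicator χ =ᵐ[γ.k S ω] (fun _ => (0:ℝ)) := by
      filter_upwards [hAae] with x hx
      exact Set.indicator_of_notMem hx χ
    rw [Set.indicator_of_notMem hω]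
    unfold specInt
    rw [integral_congr_ae hae, integral_zero]

lemma ae_boundary [Countable ι] [MeasurableSingletonClass Ω₀] (γ : Specification ι Ω₀)
    (W : Finset ι) (η : ι → Ω₀) :
    ∀ᵐ ω ∂(γ.k W η), ∀ x, x ∉ W → ω x = η x := by
  haveI := γ.isProb W η
  have h : ∀ x, x ∉ W → (γ.k W η) ({ω : ι → Ω₀ | ω x = η x}ᶜ) = 0 := by
    intro x hx
    have hx' : x ∈ ((W : Set ι))ᶜ := by simpa using hx
    have hcyl : MeasurableSet[cylinderSigma Ω₀ ((W : Set ι))ᶜ] {ω : ι → Ω₀ | ω x = η x} :=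
      ⟨(fun v : Set.Elem ((W : Set ι))ᶜ → Ω₀ => v ⟨x, hx'⟩) ⁻¹' {η x},
        (measurable_pi_apply _) (measurableSet_singleton _), rfl⟩
    rw [γ.proper W _ hcyl.compl η]
    have hmem : η ∉ {ω : ι → Ω₀ | ω x = η x}ᶜ := by simp
    rw [Set.indicator_of_notMem hmem]
  rw [ae_iff]
  refine measure_mono_null (fun ω hω => ?_)
    (measure_iUnion_null (fun x : ι => measure_iUnion_null (fun hx : x ∉ W => h x hx)))
  simp only [Set.mem_setOf_eq] at hω
  push_neg at hω
  obtain ⟨x, hx, hne⟩ := hω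
  exact Set.mem_iUnion.2 ⟨x, Set.mem_iUnion.2 ⟨hx, hne⟩⟩

end PBD
namespace PBD
open MeasureTheory Filter Topology
set_option linter.unusedSectionVars false

variable {ι : Type*} {Ω₀ : Type*} [MeasurableSpace Ω₀]

/-- Projection to the coordinates in `D`. -/
def proj (D : Finset ι) : (ι → Ω₀) → ({x // x ∈ D} → Ω₀) := fun ω (x : {x // x ∈ D}) => ω (x : ι)

lemma measurable_proj' (D : Finset ι) : Measurable (proj (Ω₀ := Ω₀) D) :=
  measurable_pi_lambda _ (fun x => measurable_pi_apply _)

section transfer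

variable [Fintype Ω₀] [DiscreteMeasurableSpace Ω₀] [Nonempty Ω₀]

instance fintype_projSpace (D : Finset ι) : Fintype ({x // x ∈ D} → Ω₀) := by
  classical
  infer_instance

lemma isProb_restrictTo (D : Finset ι) (μ : Measure (ι → Ω₀)) [IsProbabilityMeasure μ] :
    IsProbabilityMeasure (restrictTo D μ) :=
  Measure.isProbabilityMeasure_map (measurable_proj' D).aemeasurable

lemma restrictTo_singleton (D : Finset ι) (μ : Measure (ι → Ω₀)) (b : {x // x ∈ D} → Ω₀) :
    (restrictTo D μ) {b} = μ (proj D ⁻¹' {b}) :=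
  Measure.map_apply (measurable_proj' D) (measurableSet_singleton b)

/-- The key Radon-Nikodym identity on atoms. -/
lemma gb_mul (D : Finset ι) (μm μp : Measure (ι → Ω₀)) [IsProbabilityMeasure μp]
    [IsProbabilityMeasure μm] (hac : restrictTo D μm ≪ restrictTo D μp)
    (b : {x // x ∈ D} → Ω₀) :
    ((restrictTo D μm).rnDeriv (restrictTo D μp) b).toReal * ((restrictTo D μp) {b}).toReal
      = ((restrictTo D μm) {b}).toReal := by
  haveI := isProb_restrictTo D μp
  haveI := isProb_restrictTo D μm
  have hb : (restrictTo D μm) {b}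
      = (restrictTo D μm).rnDeriv (restrictTo D μp) b * (restrictTo D μp) {b} := by
    conv_lhs => rw [← Measure.withDensity_rnDeriv_eq _ _ hac]
    rw [withDensity_apply _ (measurableSet_singleton b), lintegral_singleton]
  rw [hb, ENNReal.toReal_mul]

lemma density_eq (D : Finset ι) (μm μp : Measure (ι → Ω₀)) (ω : ι → Ω₀) :
    density D μm μp ω
      = ((restrictTo D μm).rnDeriv (restrictTo D μp) (proj D ω)).toReal := rfl

lemma density_nonneg (D : Finset ι) (μm μp : Measure (ι → Ω₀)) (ω : ι → Ω₀) :
    0 ≤ density D μm μp ω := ENNReal.toReal_nonneg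

lemma density_depends (D : Finset ι) (μm μp : Measure (ι → Ω₀)) :
    ∀ ω ω' : ι → Ω₀, (∀ x ∈ D, ω x = ω' x) → density D μm μp ω = density D μm μp ω' := by
  intro ω ω' h
  have : proj (Ω₀ := Ω₀) D ω = proj D ω' := by
    funext x; exact h x x.2
  rw [density_eq, density_eq, this]

lemma density_finiteRange (D : Finset ι) (μm μp : Measure (ι → Ω₀)) :
    (Set.range (density D μm μp)).Finite := by
  have hsub : Set.range (density D μm μp)
      ⊆ Set.range (fun b => ((restrictTo D μm).rnDeriv (restrictTo D μp) b).toReal) := by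
    rintro - ⟨ω, rfl⟩
    exact ⟨proj D ω, rfl⟩
  exact (Set.finite_range _).subset hsub

lemma integrable_fin {α : Type*} [Finite α] [MeasurableSpace α] [MeasurableSingletonClass α]
    (μ : Measure α) [IsFiniteMeasure μ] (f : α → ℝ) : Integrable f μ :=
  .of_finite

/-- Change of measure for functions depending only on the `D`-coordinates. -/
lemma transfer (D : Finset ι) (μm μp : Measure (ι → Ω₀)) [IsProbabilityMeasure μp]
    [IsProbabilityMeasure μm] (hac : restrictTo D μm ≪ restrictTo D μp)
    {ψ : (ι → Ω₀) → ℝ}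
    (hdep : ∀ ω ω' : ι → Ω₀, (∀ x ∈ D, ω x = ω' x) → ψ ω = ψ ω') :
    ∫ ω, density D μm μp ω * ψ ω ∂μp = ∫ ω, ψ ω ∂μm := by
  classical
  haveI := isProb_restrictTo D μp
  haveI := isProb_restrictTo D μm
  set rnD := (restrictTo D μm).rnDeriv (restrictTo D μp) with hrnD
  set ext : ({x // x ∈ D} → Ω₀) → (ι → Ω₀) := fun b x =>
    if hx : x ∈ D then b ⟨x, hx⟩ else Classical.arbitrary Ω₀ with hext
  set Ψ : ({x // x ∈ D} → Ω₀) → ℝ := fun b => ψ (ext b) with hΨ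
  have hψ : ∀ ω, ψ ω = Ψ (proj D ω) := by
    intro ω
    refine hdep ω _ (fun x hx => ?_)
    simp only [hΨ, hext, proj]
    rw [dif_pos hx]
  have h1 : ∫ ω, density D μm μp ω * ψ ω ∂μp
      = ∫ b, (rnD b).toReal * Ψ b ∂(restrictTo D μp) := by
    have hmap : restrictTo D μp = Measure.map (proj D) μp := rfl
    rw [hmap, integral_map (measurable_proj' D).aemeasurable
      (measurable_of_countable _).aestronglyMeasurable]
    refine integral_congr_ae (Filter.Eventually.of_forall fun ω => ?_)
    show density D μm μp ω * ψ ω = (rnD (proj D ω)).toReal * Ψ (proj D ω)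
    rw [density_eq, hψ ω]
  have h2 : ∫ ω, ψ ω ∂μm = ∫ b, Ψ b ∂(restrictTo D μm) := by
    have hmap : restrictTo D μm = Measure.map (proj D) μm := rfl
    rw [hmap, integral_map (measurable_proj' D).aemeasurable
      (measurable_of_countable _).aestronglyMeasurable]
    refine integral_congr_ae (Filter.Eventually.of_forall fun ω => ?_)
    show ψ ω = Ψ (proj D ω)
    rw [hψ ω]
  rw [h1, h2, integral_fintype (integrable_fin _ _), integral_fintype (integrable_fin _ _)]
  refine Finset.sum_congr rfl fun b _ => ?_
  have := gb_mul D μm μp hac b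
  simp only [smul_eq_mul, hrnD, Measure.real] at *
  calc ((restrictTo D μp) {b}).toReal * ((rnD b).toReal * Ψ b)
      = ((rnD b).toReal * ((restrictTo D μp) {b}).toReal) * Ψ b := by ring
    _ = ((restrictTo D μm) {b}).toReal * Ψ b := by rw [this]

end transfer
end PBD
namespace PBD
open MeasureTheory Filter Topology
set_option linter.unusedSectionVars false
set_option maxHeartbeats 1000000

variable {ι : Type*} [Countable ι] {Ω₀ : Type*} [Fintype Ω₀] [MeasurableSpace Ω₀]
  [DiscreteMeasurableSpace Ω₀] [LinearOrder Ω₀] [BoundedOrder Ω₀]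

lemma finiteRange_indicator {A : Set (ι → Ω₀)} {χ : (ι → Ω₀) → ℝ}
    (h : (Set.range χ).Finite) : (Set.range (A.indicator χ)).Finite := by
  refine (h.insert 0).subset ?_
  rintro - ⟨ω, rfl⟩
  by_cases hω : ω ∈ A
  · rw [Set.indicator_of_mem hω]; exact Set.mem_insert_of_mem _ ⟨ω, rfl⟩
  · rw [Set.indicator_of_notMem hω]; exact Set.mem_insert _ _

lemma abs_indicator_le {A : Set (ι → Ω₀)} {χ : (ι → Ω₀) → ℝ} {C : ℝ} (hC0 : 0 ≤ C)
    (hb : ∀ ω, |χ ω| ≤ C) (ω : ι → Ω₀) : |A.indicator χ ω| ≤ C := by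
  by_cases hω : ω ∈ A
  · rw [Set.indicator_of_mem hω]; exact hb ω
  · rw [Set.indicator_of_notMem hω]; simpa using hC0

/-- Finite-volume factorization over an atom of `F_D`. -/
lemma fv_factor (γ : Specification ι Ω₀) (D W : Finset ι) (hDW : D ⊆ W)
    (b : {x // x ∈ D} → Ω₀) (c : Ω₀) {χ : (ι → Ω₀) → ℝ}
    (hχm : Measurable χ) (hχr : (Set.range χ).Finite) :
    specInt γ W ((proj D ⁻¹' {b}).indicator χ) (fun _ => c)
      = specInt γ (W \ D) χ (fun x => if hx : x ∈ D then b ⟨x, hx⟩ else c)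
        * specInt γ W ((proj D ⁻¹' {b}).indicator (fun _ => (1:ℝ))) (fun _ => c) := by
  classical
  set S := W \ D with hS
  set η : ι → Ω₀ := fun _ => c with hη
  set ζ : ι → Ω₀ := fun x => if hx : x ∈ D then b ⟨x, hx⟩ else c with hζ
  set A : Set (ι → Ω₀) := proj D ⁻¹' {b} with hA
  haveI := γ.isProb W η
  have hAmeas : MeasurableSet A := (measurable_proj' D) (measurableSet_singleton b)
  have hAm : Measurable (A.indicator χ) := hχm.indicator hAmeas
  have hAr : (Set.range (A.indicator χ)).Finite := finiteRange_indicator hχr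
  have hsub : ∀ x : ι, x ∈ D → x ∈ ((S : Set ι))ᶜ := by
    intro x hx
    simp [hS, Finset.mem_sdiff, hx]
  have hAcyl : MeasurableSet[cylinderSigma Ω₀ ((S : Set ι))ᶜ] A := by
    refine ⟨(fun (v : Set.Elem (((S : Set ι))ᶜ) → Ω₀) (x : {y // y ∈ D}) =>
      v ⟨(x : ι), hsub x x.2⟩) ⁻¹' {b},
      (measurable_pi_lambda _ fun x => measurable_pi_apply _) (measurableSet_singleton b), ?_⟩
    rfl
  calc specInt γ W (A.indicator χ) η
      = ∫ ω, specInt γ S (A.indicator χ) ω ∂(γ.k W η) :=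
        specInt_bind γ Finset.sdiff_subset hAm hAr η
    _ = ∫ ω, A.indicator (fun _ => specInt γ S χ ζ) ω ∂(γ.k W η) := by
        refine integral_congr_ae ?_
        filter_upwards [ae_boundary γ W η] with ω hω
        rw [specInt_indicator_pullout γ S hAmeas hAcyl χ ω]
        by_cases hmem : ω ∈ A
        · rw [Set.indicator_of_mem hmem, Set.indicator_of_mem hmem]
          refine specInt_eq_of_agree γ S χ (fun x hx => ?_)
          have hxS : x ∉ S := by simpa using hx
          by_cases hxD : x ∈ D
          · have hproj : proj D ω = b := hmem
            have hωx : ω x = b ⟨x, hxD⟩ := congrFun hproj ⟨x, hxD⟩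
            rw [hωx, hζ]
            simp [hxD]
          · have hxW : x ∉ W := fun hxW => hxS (Finset.mem_sdiff.2 ⟨hxW, hxD⟩)
            rw [hω x hxW, hζ]
            simp [hxD, hη]
        · rw [Set.indicator_of_notMem hmem, Set.indicator_of_notMem hmem]
    _ = specInt γ S χ ζ * specInt γ W (A.indicator (fun _ => (1:ℝ))) η := by
        have hrfl : specInt γ W (A.indicator (fun _ => (1:ℝ))) η
            = ∫ ω, A.indicator (fun _ => (1:ℝ)) ω ∂(γ.k W η) := rfl
        rw [hrfl, ← integral_const_mul]
        refine integral_congr_ae (Filter.Eventually.of_forall fun ω => ?_)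
        simp only [Set.indicator_apply]
        by_cases hmem : ω ∈ A <;> simp [hmem]

/-- The per-atom conditional domination estimate, obtained as a limit of finite-volume
factorizations. -/
lemma per_atom (γ : Specification ι Ω₀) (hmono : MonoPreserving γ)
    (μp μm : Measure (ι → Ω₀))
    (hμp : IsLimitWithBoundary γ (fun _ => (⊤ : Ω₀)) μp)
    (hμm : IsLimitWithBoundary γ (fun _ => (⊥ : Ω₀)) μm)
    (D : Finset ι) (hac : restrictTo D μm ≪ restrictTo D μp)
    {χ : (ι → Ω₀) → ℝ} (hχm : Measurable χ) (hχmono : Monotone χ)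
    (E : Finset ι) (hdep : ∀ ω ω' : ι → Ω₀, (∀ x ∈ E, ω x = ω' x) → χ ω = χ ω')
    (b : {x // x ∈ D} → Ω₀) :
    ∫ ω, (proj D ⁻¹' {b}).indicator χ ω ∂μm
      ≤ ((restrictTo D μm).rnDeriv (restrictTo D μp) b).toReal
        * ∫ ω, (proj D ⁻¹' {b}).indicator χ ω ∂μp := by
  classical
  haveI := hμp.1
  haveI := hμm.1
  haveI : Nonempty Ω₀ := ⟨⊥⟩
  set A : Set (ι → Ω₀) := proj D ⁻¹' {b} with hA
  have hAmeas : MeasurableSet A := (measurable_proj' D) (measurableSet_singleton b)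
  have hχr : (Set.range χ).Finite := finiteRange_of_depends E hdep
  obtain ⟨C, hC0, hCb⟩ := exists_bound_of_finiteRange hχr
  set G : ℝ := ((restrictTo D μm).rnDeriv (restrictTo D μp) b).toReal with hG
  have hG0 : 0 ≤ G := ENNReal.toReal_nonneg
  -- locality of the indicator functions
  have hdepA : ∀ ω ω' : ι → Ω₀, (∀ x ∈ D, ω x = ω' x) → (ω ∈ A ↔ ω' ∈ A) := by
    intro ω ω' h
    have hpr : proj (Ω₀ := Ω₀) D ω = proj D ω' := funext fun x => h x x.2
    simp only [hA, Set.mem_preimage, Set.mem_singleton_iff, hpr]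
  have hdepAχ : ∀ ω ω' : ι → Ω₀, (∀ x ∈ D ∪ E, ω x = ω' x) →
      A.indicator χ ω = A.indicator χ ω' := by
    intro ω ω' h
    have hiff := hdepA ω ω' (fun x hx => h x (Finset.mem_union_left _ hx))
    have hχeq := hdep ω ω' (fun x hx => h x (Finset.mem_union_right _ hx))
    by_cases hmem : ω ∈ A
    · rw [Set.indicator_of_mem hmem, Set.indicator_of_mem (hiff.1 hmem), hχeq]
    · rw [Set.indicator_of_notMem hmem, Set.indicator_of_notMem (fun hc => hmem (hiff.2 hc))]
  have hdepA1 : ∀ ω ω' : ι → Ω₀, (∀ x ∈ D, ω x = ω' x) →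
      A.indicator (fun _ => (1:ℝ)) ω = A.indicator (fun _ => (1:ℝ)) ω' := by
    intro ω ω' h
    have hiff := hdepA ω ω' h
    by_cases hmem : ω ∈ A
    · rw [Set.indicator_of_mem hmem, Set.indicator_of_mem (hiff.1 hmem)]
    · rw [Set.indicator_of_notMem hmem, Set.indicator_of_notMem (fun hc => hmem (hiff.2 hc))]
  -- convergence of finite-volume quantities
  have tPχ := hμp.2 _ (isLocal_of_depends (D ∪ E) hdepAχ)
  have tMχ := hμm.2 _ (isLocal_of_depends (D ∪ E) hdepAχ)
  have tP1 := hμp.2 _ (isLocal_of_depends D hdepA1)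
  have tM1 := hμm.2 _ (isLocal_of_depends D hdepA1)
  -- the density identity on the atom
  have hPQ : G * ∫ ω, A.indicator (fun _ => (1:ℝ)) ω ∂μp
      = ∫ ω, A.indicator (fun _ => (1:ℝ)) ω ∂μm := by
    rw [integral_indicator_const (1:ℝ) hAmeas, integral_indicator_const (1:ℝ) hAmeas]
    simp only [smul_eq_mul, mul_one, Measure.real]
    rw [hA, ← restrictTo_singleton D μp b, ← restrictTo_singleton D μm b]
    exact gb_mul D μm μp hac b
  -- boundary configurations
  set ζp : ι → Ω₀ := fun x => if hx : x ∈ D then b ⟨x, hx⟩ else ⊤ with hζp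
  set ζm : ι → Ω₀ := fun x => if hx : x ∈ D then b ⟨x, hx⟩ else ⊥ with hζm
  have hζle : ζm ≤ ζp := by
    intro x
    by_cases hx : x ∈ D
    · simp [hζp, hζm, hx]
    · simp only [hζp, hζm, dif_neg hx]
      exact bot_le
  -- finite-volume estimate
  have hfv : ∀ W : Finset ι, D ⊆ W →
      -(C * |G * specInt γ W (A.indicator (fun _ => (1:ℝ))) (fun _ => ⊤)
             - specInt γ W (A.indicator (fun _ => (1:ℝ))) (fun _ => ⊥)|)
      ≤ G * specInt γ W (A.indicator χ) (fun _ => ⊤)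
          - specInt γ W (A.indicator χ) (fun _ => ⊥) := by
    intro W hDW
    have h1p := fv_factor γ D W hDW b ⊤ hχm hχr
    have h1m := fv_factor γ D W hDW b ⊥ hχm hχr
    rw [hA] at *
    rw [h1p, h1m]
    set cp := specInt γ (W \ D) χ (fun x => if hx : x ∈ D then b ⟨x, hx⟩ else ⊤) with hcp
    set cm := specInt γ (W \ D) χ (fun x => if hx : x ∈ D then b ⟨x, hx⟩ else ⊥) with hcm
    set ap := specInt γ W ((proj D ⁻¹' {b}).indicator (fun _ => (1:ℝ))) (fun _ => ⊤) with hap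
    set am := specInt γ W ((proj D ⁻¹' {b}).indicator (fun _ => (1:ℝ))) (fun _ => ⊥) with ham
    have hcle : cm ≤ cp := by
      rw [hcp, hcm]
      exact hmono (W \ D) χ hχm hχmono hζle
    have hap0 : 0 ≤ ap := by
      rw [hap]
      refine integral_nonneg fun ω => ?_
      exact Set.indicator_nonneg (fun _ _ => zero_le_one) ω
    have ham0 : 0 ≤ am := by
      rw [ham]
      refine integral_nonneg fun ω => ?_
      exact Set.indicator_nonneg (fun _ _ => zero_le_one) ω
    have hcmB : |cm| ≤ C := abs_specInt_le γ _ hCb _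
    have h₁ : 0 ≤ G * ap * (cp - cm) :=
      mul_nonneg (mul_nonneg hG0 hap0) (sub_nonneg.2 hcle)
    have h₂ : -(C * |G * ap - am|) ≤ cm * (G * ap - am) := by
      calc -(C * |G * ap - am|) ≤ -(|cm| * |G * ap - am|) := by
            exact neg_le_neg (mul_le_mul_of_nonneg_right hcmB (abs_nonneg _))
        _ = -|cm * (G * ap - am)| := by rw [abs_mul]
        _ ≤ cm * (G * ap - am) := neg_abs_le _
    have hre : G * (cp * ap) - cm * am = G * ap * (cp - cm) + cm * (G * ap - am) := by ring
    linarith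
  -- pass to the limit
  have hT : Tendsto (fun W => G * specInt γ W (A.indicator χ) (fun _ => ⊤)
      - specInt γ W (A.indicator χ) (fun _ => ⊥)) atTop
      (𝓝 (G * ∫ ω, A.indicator χ ω ∂μp - ∫ ω, A.indicator χ ω ∂μm)) :=
    (tendsto_const_nhds.mul tPχ).sub tMχ
  have hB : Tendsto (fun W => -(C * |G * specInt γ W (A.indicator (fun _ => (1:ℝ))) (fun _ => ⊤)
      - specInt γ W (A.indicator (fun _ => (1:ℝ))) (fun _ => ⊥)|)) atTop (𝓝 0) := by
    have h0 : -(C * |G * (∫ ω, A.indicator (fun _ => (1:ℝ)) ω ∂μp)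
        - ∫ ω, A.indicator (fun _ => (1:ℝ)) ω ∂μm|) = 0 := by
      rw [sub_eq_zero.2 hPQ]
      simp
    rw [← h0]
    exact (((tendsto_const_nhds.mul tP1).sub tM1).abs.const_mul C).neg
  have hle : (0:ℝ) ≤ G * ∫ ω, A.indicator χ ω ∂μp - ∫ ω, A.indicator χ ω ∂μm := by
    refine le_of_tendsto_of_tendsto hB hT ?_
    filter_upwards [eventually_ge_atTop D] with W hW
    exact hfv W hW
  linarith

/-- The base case of the domination inequality: local increasing test functions. -/
lemma base_ineq (γ : Specification ι Ω₀) (hmono : MonoPreserving γ)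
    (μp μm : Measure (ι → Ω₀))
    (hμp : IsLimitWithBoundary γ (fun _ => (⊤ : Ω₀)) μp)
    (hμm : IsLimitWithBoundary γ (fun _ => (⊥ : Ω₀)) μm)
    (D : Finset ι) (hac : restrictTo D μm ≪ restrictTo D μp)
    {χ : (ι → Ω₀) → ℝ} (hχm : Measurable χ) (hχmono : Monotone χ)
    (E : Finset ι) (hdep : ∀ ω ω' : ι → Ω₀, (∀ x ∈ E, ω x = ω' x) → χ ω = χ ω') :
    ∫ ω, χ ω ∂μm ≤ ∫ ω, density D μm μp ω * χ ω ∂μp := by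
  classical
  haveI := hμp.1
  haveI := hμm.1
  haveI : Nonempty Ω₀ := ⟨⊥⟩
  have hχr : (Set.range χ).Finite := finiteRange_of_depends E hdep
  obtain ⟨C, hC0, hCb⟩ := exists_bound_of_finiteRange hχr
  set G : ({x // x ∈ D} → Ω₀) → ℝ :=
    fun b => ((restrictTo D μm).rnDeriv (restrictTo D μp) b).toReal with hGdef
  have hAmeas : ∀ b : {x // x ∈ D} → Ω₀, MeasurableSet (proj D ⁻¹' {b} : Set (ι → Ω₀)) :=
    fun b => (measurable_proj' D) (measurableSet_singleton b)
  have hL : ∫ ω, χ ω ∂μm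
      = ∑ b : {x // x ∈ D} → Ω₀, ∫ ω, (proj D ⁻¹' {b}).indicator χ ω ∂μm := by
    rw [← integral_finset_sum]
    · refine integral_congr_ae (Filter.Eventually.of_forall fun ω => ?_)
      show χ ω = ∑ b : {x // x ∈ D} → Ω₀, (proj D ⁻¹' {b}).indicator χ ω
      rw [Finset.sum_eq_single (proj D ω)]
      · exact (Set.indicator_of_mem (show ω ∈ proj D ⁻¹' {proj D ω} from rfl) χ).symm
      · intro b _ hne
        exact Set.indicator_of_notMem (show ω ∉ proj D ⁻¹' {b} from
          fun hc => hne (Set.mem_singleton_iff.1 (Set.mem_preimage.1 hc)).symm) χ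
      · intro habs
        exact absurd (Finset.mem_univ _) habs
    · intro b _
      exact integrable_of_bound _ ((hχm.indicator (hAmeas b)).aestronglyMeasurable)
        (abs_indicator_le hC0 hCb)
  have hR : ∫ ω, density D μm μp ω * χ ω ∂μp
      = ∑ b : {x // x ∈ D} → Ω₀,
          ∫ ω, (proj D ⁻¹' {b}).indicator (fun ω' => G b * χ ω') ω ∂μp := by
    rw [← integral_finset_sum]
    · refine integral_congr_ae (Filter.Eventually.of_forall fun ω => ?_)
      show density D μm μp ω * χ ω
        = ∑ b : {x // x ∈ D} → Ω₀, (proj D ⁻¹' {b}).indicator (fun ω' => G b * χ ω') ω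
      rw [Finset.sum_eq_single (proj D ω)]
      · rw [Set.indicator_of_mem (show ω ∈ proj D ⁻¹' {proj D ω} from rfl), density_eq]
      · intro b _ hne
        exact Set.indicator_of_notMem (show ω ∉ proj D ⁻¹' {b} from
          fun hc => hne (Set.mem_singleton_iff.1 (Set.mem_preimage.1 hc)).symm) _
      · intro habs
        exact absurd (Finset.mem_univ _) habs
    · intro b _
      refine integrable_of_bound _ (((measurable_const.mul hχm).indicator
        (hAmeas b)).aestronglyMeasurable) (C := |G b| * C) ?_
      refine abs_indicator_le (mul_nonneg (abs_nonneg _) hC0) (fun ω => ?_)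
      rw [abs_mul]
      exact mul_le_mul_of_nonneg_left (hCb ω) (abs_nonneg _)
  rw [hL, hR]
  refine Finset.sum_le_sum fun b _ => ?_
  have hpa := per_atom γ hmono μp μm hμp hμm D hac hχm hχmono E hdep b
  have hconv : ∫ ω, (proj D ⁻¹' {b}).indicator (fun ω' => G b * χ ω') ω ∂μp
      = G b * ∫ ω, (proj D ⁻¹' {b}).indicator χ ω ∂μp := by
    rw [← integral_const_mul]
    refine integral_congr_ae (Filter.Eventually.of_forall fun ω => ?_)
    simp only [Set.indicator_apply]
    by_cases hmem : ω ∈ (proj D ⁻¹' {b} : Set (ι → Ω₀)) <;> simp [hmem]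
  rw [hconv]
  exact hpa

end PBD
namespace PBD
open MeasureTheory Filter Topology
set_option linter.unusedSectionVars false
set_option maxHeartbeats 1000000

variable {ι : Type*} [Countable ι] {Ω₀ : Type*} [Fintype Ω₀] [MeasurableSpace Ω₀]
  [DiscreteMeasurableSpace Ω₀] [LinearOrder Ω₀] [BoundedOrder Ω₀]

lemma measurable_density (D : Finset ι) (μm μp : Measure (ι → Ω₀)) :
    Measurable (density D μm μp) := by
  have hrw : density D μm μp = fun ω =>
      ((restrictTo D μm).rnDeriv (restrictTo D μp) (proj D ω)).toReal := rfl
  rw [hrw]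
  exact ((Measure.measurable_rnDeriv _ _).comp (measurable_proj' D)).ennreal_toReal

/-- Comparison on measurable upper sets, via inner regularity and closed upper hulls. -/
lemma upper_set_ineq [Nonempty ι] (γ : Specification ι Ω₀) (hmono : MonoPreserving γ)
    (μp μm : Measure (ι → Ω₀))
    (hμp : IsLimitWithBoundary γ (fun _ => (⊤ : Ω₀)) μp)
    (hμm : IsLimitWithBoundary γ (fun _ => (⊥ : Ω₀)) μm)
    (D : Finset ι) (hac : restrictTo D μm ≪ restrictTo D μp)
    {U : Set (ι → Ω₀)} (hUmeas : MeasurableSet U)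
    (hUupper : ∀ ⦃ω ω' : ι → Ω₀⦄, ω ≤ ω' → ω ∈ U → ω' ∈ U) :
    (μm U).toReal ≤ ∫ ω, density D μm μp ω * U.indicator (fun _ => (1:ℝ)) ω ∂μp := by
  classical
  haveI := hμp.1
  haveI := hμm.1
  haveI : Nonempty Ω₀ := ⟨⊥⟩
  letI tΩ : TopologicalSpace Ω₀ := ⊥
  haveI : DiscreteTopology Ω₀ := ⟨rfl⟩
  haveI : BorelSpace Ω₀ := ⟨le_antisymm
    (fun s _ => MeasurableSpace.measurableSet_generateFrom (isOpen_discrete s))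
    (MeasurableSpace.generateFrom_le fun s _ => MeasurableSet.of_discrete)⟩
  obtain ⟨Cg, hCg0, hCgb⟩ := exists_bound_of_finiteRange (density_finiteRange D μm μp)
  have hgmeas := measurable_density D μm μp
  have hg0 : ∀ ω, 0 ≤ density D μm μp ω := density_nonneg D μm μp
  have hbnd : ∀ (A : Set (ι → Ω₀)) (ω : ι → Ω₀),
      |density D μm μp ω * A.indicator (fun _ => (1:ℝ)) ω| ≤ Cg := by
    intro A ω
    rw [abs_mul]
    calc |density D μm μp ω| * |A.indicator (fun _ => (1:ℝ)) ω|
        ≤ Cg * 1 := mul_le_mul (hCgb ω)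
          (abs_indicator_le zero_le_one (fun _ => by simp) ω) (abs_nonneg _) hCg0
      _ = Cg := mul_one _
  refine le_of_forall_pos_le_add fun ε hε => ?_
  obtain ⟨K, hKU, hKcl, hKlt⟩ := hUmeas.exists_isClosed_lt_add (μ := μm)
    (measure_ne_top μm U) (ε := ENNReal.ofReal ε) (ENNReal.ofReal_pos.2 hε).ne'
  set C' : Set (ι → Ω₀) := {ω' | ∃ ω ∈ K, ω ≤ ω'} with hC'
  have hKC' : K ⊆ C' := fun ω hω => ⟨ω, hω, le_rfl⟩
  have hC'U : C' ⊆ U := by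
    rintro ω' ⟨ω, hω, hle⟩
    exact hUupper hle (hKU hω)
  have hC'upper : ∀ ⦃a b : ι → Ω₀⦄, a ≤ b → a ∈ C' → b ∈ C' := by
    rintro a b hab ⟨ω, hω, hle⟩
    exact ⟨ω, hω, hle.trans hab⟩
  have hle_closed : IsClosed {p : (ι → Ω₀) × (ι → Ω₀) | p.1 ≤ p.2} := by
    have hrw : {p : (ι → Ω₀) × (ι → Ω₀) | p.1 ≤ p.2}
        = ⋂ x : ι, {p : (ι → Ω₀) × (ι → Ω₀) | p.1 x ≤ p.2 x} := by
      ext p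
      simp [Pi.le_def, Set.mem_iInter]
    rw [hrw]
    refine isClosed_iInter fun x => ?_
    have hcont : Continuous fun p : (ι → Ω₀) × (ι → Ω₀) => (p.1 x, p.2 x) :=
      ((continuous_apply x).comp continuous_fst).prodMk
        ((continuous_apply x).comp continuous_snd)
    exact (isClosed_discrete {q : Ω₀ × Ω₀ | q.1 ≤ q.2}).preimage hcont
  have hC'cl : IsClosed C' := by
    have himg : C' = Prod.snd '' ({p : (ι → Ω₀) × (ι → Ω₀) | p.1 ∈ K} ∩ {p | p.1 ≤ p.2}) := by
      ext ω'
      constructor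
      · rintro ⟨ω, hω, hle⟩
        exact ⟨(ω, ω'), ⟨hω, hle⟩, rfl⟩
      · rintro ⟨p, ⟨hp1, hp2⟩, rfl⟩
        exact ⟨p.1, hp1, hp2⟩
    rw [himg]
    have hclosed : IsClosed ({p : (ι → Ω₀) × (ι → Ω₀) | p.1 ∈ K} ∩ {p | p.1 ≤ p.2}) :=
      (hKcl.preimage continuous_fst).inter hle_closed
    exact (hclosed.isCompact.image continuous_snd).isClosed
  have hC'meas : MeasurableSet C' := hC'cl.measurableSet
  obtain ⟨e, he⟩ := exists_surjective_nat ι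
  set En : ℕ → Finset ι := fun n => (Finset.range n).image e with hEn
  have hEmono : ∀ {m n : ℕ}, m ≤ n → En m ⊆ En n := fun {m n} h =>
    Finset.image_subset_image (Finset.range_subset_range.2 h)
  have hEexh : ∀ x : ι, ∃ N, ∀ n, N ≤ n → x ∈ En n := by
    intro x
    obtain ⟨m, rfl⟩ := he x
    exact ⟨m + 1, fun n hn => Finset.mem_image.2 ⟨m, Finset.mem_range.2 (by omega), rfl⟩⟩
  set V : ℕ → Set (ι → Ω₀) := fun n => proj (En n) ⁻¹' (proj (En n) '' C') with hV
  have hC'V : ∀ n, C' ⊆ V n := fun n => Set.subset_preimage_image _ _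
  have hVanti : ∀ {m n : ℕ}, m ≤ n → V n ⊆ V m := by
    intro m n h ω hω
    obtain ⟨ξ, hξ, hproj⟩ := hω
    refine ⟨ξ, hξ, ?_⟩
    funext x
    exact congrFun hproj ⟨(x : ι), hEmono h x.2⟩
  have hViInter : (⋂ n, V n) = C' := by
    refine Set.Subset.antisymm ?_ (Set.subset_iInter hC'V)
    intro ω hω
    simp only [Set.mem_iInter] at hω
    choose ξ hξmem hξproj using fun n => hω n
    have htend : Tendsto ξ atTop (𝓝 ω) := by
      rw [tendsto_pi_nhds]
      intro x
      obtain ⟨N, hN⟩ := hEexh x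
      have hev : ∀ᶠ n in atTop, ξ n x = ω x :=
        eventually_atTop.2 ⟨N, fun n hn => congrFun (hξproj n) ⟨x, hN n hn⟩⟩
      exact Tendsto.congr' (hev.mono fun n hn => hn.symm) tendsto_const_nhds
    exact hC'cl.mem_of_tendsto htend (Filter.Eventually.of_forall hξmem)
  have hVupper : ∀ n, ∀ ⦃a b : ι → Ω₀⦄, a ≤ b → a ∈ V n → b ∈ V n := by
    intro n a b hab ha
    obtain ⟨ξ, hξ, hproj⟩ := ha
    refine ⟨fun x => if x ∈ En n then b x else ξ x, ?_, ?_⟩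
    · refine hC'upper ?_ hξ
      intro x
      by_cases hx : x ∈ En n
      · simp only [if_pos hx]
        have hxa : ξ x = a x := congrFun hproj ⟨x, hx⟩
        rw [hxa]
        exact hab x
      · simp [if_neg hx]
    · funext x
      have hx := x.2
      show (if (x : ι) ∈ En n then b (x : ι) else ξ (x : ι)) = b (x : ι)
      rw [if_pos hx]
  have hVmeas : ∀ n, MeasurableSet (V n) :=
    fun n => (measurable_proj' (En n)) ((Set.toFinite _).measurableSet)
  have hVdep : ∀ n, ∀ ω ω' : ι → Ω₀, (∀ x ∈ En n, ω x = ω' x) →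
      (V n).indicator (fun _ => (1:ℝ)) ω = (V n).indicator (fun _ => (1:ℝ)) ω' := by
    intro n ω ω' h
    have hpr : proj (Ω₀ := Ω₀) (En n) ω = proj (En n) ω' := funext fun x => h x x.2
    have hiff : ω ∈ V n ↔ ω' ∈ V n := by
      simp only [hV, Set.mem_preimage, hpr]
    by_cases hmem : ω ∈ V n
    · rw [Set.indicator_of_mem hmem, Set.indicator_of_mem (hiff.1 hmem)]
    · rw [Set.indicator_of_notMem hmem, Set.indicator_of_notMem (fun hc => hmem (hiff.2 hc))]
  have hVmono : ∀ n, Monotone ((V n).indicator (fun _ => (1:ℝ))) := by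
    intro n a b hab
    by_cases hmem : a ∈ V n
    · rw [Set.indicator_of_mem hmem, Set.indicator_of_mem (hVupper n hab hmem)]
    · rw [Set.indicator_of_notMem hmem]
      exact Set.indicator_nonneg (fun _ _ => zero_le_one) b
  have hbase : ∀ n, ∫ ω, (V n).indicator (fun _ => (1:ℝ)) ω ∂μm
      ≤ ∫ ω, density D μm μp ω * (V n).indicator (fun _ => (1:ℝ)) ω ∂μp :=
    fun n => base_ineq γ hmono μp μm hμp hμm D hac
      (measurable_const.indicator (hVmeas n)) (hVmono n) (En n) (hVdep n)
  have hptwise : ∀ ω : ι → Ω₀,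
      Tendsto (fun n => density D μm μp ω * (V n).indicator (fun _ => (1:ℝ)) ω)
      atTop (𝓝 (density D μm μp ω * C'.indicator (fun _ => (1:ℝ)) ω)) := by
    intro ω
    refine Tendsto.congr' ?_ tendsto_const_nhds
    by_cases hmem : ω ∈ C'
    · refine Filter.Eventually.of_forall fun n => ?_
      show density D μm μp ω * C'.indicator (fun _ => (1:ℝ)) ω
        = density D μm μp ω * (V n).indicator (fun _ => (1:ℝ)) ω
      rw [Set.indicator_of_mem hmem, Set.indicator_of_mem (hC'V n hmem)]
    · have hex : ∃ N, ω ∉ V N := by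
        by_contra hcon
        push_neg at hcon
        exact hmem (hViInter ▸ Set.mem_iInter.2 hcon)
      obtain ⟨N, hN⟩ := hex
      refine eventually_atTop.2 ⟨N, fun n hn => ?_⟩
      show density D μm μp ω * C'.indicator (fun _ => (1:ℝ)) ω
        = density D μm μp ω * (V n).indicator (fun _ => (1:ℝ)) ω
      rw [Set.indicator_of_notMem hmem, Set.indicator_of_notMem (fun hc => hN (hVanti hn hc))]
  have hdct : Tendsto (fun n => ∫ ω, density D μm μp ω * (V n).indicator (fun _ => (1:ℝ)) ω ∂μp)
      atTop (𝓝 (∫ ω, density D μm μp ω * C'.indicator (fun _ => (1:ℝ)) ω ∂μp)) := by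
    refine tendsto_integral_of_dominated_convergence (fun _ => Cg) ?_ (integrable_const Cg) ?_ ?_
    · intro n
      exact (hgmeas.mul (measurable_const.indicator (hVmeas n))).aestronglyMeasurable
    · intro n
      refine Filter.Eventually.of_forall fun ω => ?_
      rw [Real.norm_eq_abs]
      exact hbnd _ ω
    · exact Filter.Eventually.of_forall hptwise
  have hterm : ∀ n, (μm C').toReal
      ≤ ∫ ω, density D μm μp ω * (V n).indicator (fun _ => (1:ℝ)) ω ∂μp := by
    intro n
    refine le_trans ?_ (hbase n)
    rw [integral_indicator_const (1:ℝ) (hVmeas n)]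
    simp only [smul_eq_mul, mul_one]
    exact ENNReal.toReal_mono (measure_ne_top _ _) (measure_mono (hC'V n))
  have hlim : (μm C').toReal ≤ ∫ ω, density D μm μp ω * C'.indicator (fun _ => (1:ℝ)) ω ∂μp :=
    le_of_tendsto_of_tendsto tendsto_const_nhds hdct (Filter.Eventually.of_forall hterm)
  have hCU : ∫ ω, density D μm μp ω * C'.indicator (fun _ => (1:ℝ)) ω ∂μp
      ≤ ∫ ω, density D μm μp ω * U.indicator (fun _ => (1:ℝ)) ω ∂μp := by
    refine integral_mono
      (integrable_of_bound _ ((hgmeas.mul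
        (measurable_const.indicator hC'meas)).aestronglyMeasurable) (hbnd C'))
      (integrable_of_bound _ ((hgmeas.mul
        (measurable_const.indicator hUmeas)).aestronglyMeasurable) (hbnd U)) ?_
    intro ω
    show density D μm μp ω * C'.indicator (fun _ => (1:ℝ)) ω
      ≤ density D μm μp ω * U.indicator (fun _ => (1:ℝ)) ω
    by_cases hmem : ω ∈ C'
    · rw [Set.indicator_of_mem hmem, Set.indicator_of_mem (hC'U hmem)]
    · rw [Set.indicator_of_notMem hmem, mul_zero]
      exact mul_nonneg (hg0 ω) (Set.indicator_nonneg (fun _ _ => zero_le_one) ω)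
  have hKK : (μm U).toReal ≤ (μm C').toReal + ε := by
    have h1 : μm U ≤ μm C' + ENNReal.ofReal ε :=
      le_trans hKlt.le (add_le_add (measure_mono hKC') le_rfl)
    calc (μm U).toReal ≤ ((μm C') + ENNReal.ofReal ε).toReal :=
          ENNReal.toReal_mono
            (ENNReal.add_ne_top.2 ⟨measure_ne_top _ _, ENNReal.ofReal_ne_top⟩) h1
      _ = (μm C').toReal + ε := by
          rw [ENNReal.toReal_add (measure_ne_top _ _) ENNReal.ofReal_ne_top,
            ENNReal.toReal_ofReal hε.le]
  linarith

end PBD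
namespace PBD
open MeasureTheory Filter Topology
set_option linter.unusedSectionVars false
set_option maxHeartbeats 1000000

variable {ι : Type*} [Countable ι] {Ω₀ : Type*} [Fintype Ω₀] [MeasurableSpace Ω₀]
  [DiscreteMeasurableSpace Ω₀] [LinearOrder Ω₀] [BoundedOrder Ω₀]

/-- The main domination inequality for bounded monotone measurable functions. -/
lemma mono_ineq [Nonempty ι] (γ : Specification ι Ω₀) (hmono : MonoPreserving γ)
    (μp μm : Measure (ι → Ω₀))
    (hμp : IsLimitWithBoundary γ (fun _ => (⊤ : Ω₀)) μp)
    (hμm : IsLimitWithBoundary γ (fun _ => (⊥ : Ω₀)) μm)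
    (D : Finset ι) (hac : restrictTo D μm ≪ restrictTo D μp)
    {χ : (ι → Ω₀) → ℝ} (hχm : Measurable χ) (hχmono : Monotone χ)
    {C : ℝ} (hCb : ∀ ω, |χ ω| ≤ C) :
    ∫ ω, χ ω ∂μm ≤ ∫ ω, density D μm μp ω * χ ω ∂μp := by
  classical
  haveI := hμp.1
  haveI := hμm.1
  haveI : Nonempty Ω₀ := ⟨⊥⟩
  obtain ⟨Cg, hCg0, hCgb⟩ := exists_bound_of_finiteRange (density_finiteRange D μm μp)
  have hgmeas := measurable_density D μm μp
  have hg0 : ∀ ω, 0 ≤ density D μm μp ω := density_nonneg D μm μp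
  have hgint : Integrable (density D μm μp) μp :=
    integrable_of_bound _ hgmeas.aestronglyMeasurable hCgb
  have hg1 : ∫ ω, density D μm μp ω ∂μp = 1 := by
    have htr := transfer D μm μp hac (ψ := fun _ => (1:ℝ)) (fun _ _ _ => rfl)
    simpa using htr
  have hC0 : 0 ≤ C := le_trans (abs_nonneg _) (hCb (Classical.arbitrary _))
  -- main claim for nonnegative monotone functions
  have key : ∀ (ψ : (ι → Ω₀) → ℝ), Measurable ψ → Monotone ψ → ∀ B : ℝ,
      (∀ ω, 0 ≤ ψ ω) → (∀ ω, ψ ω ≤ B) →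
      ∫ ω, ψ ω ∂μm ≤ ∫ ω, density D μm μp ω * ψ ω ∂μp := by
    intro ψ hψm hψmono B hψ0 hψB
    have hB0 : 0 ≤ B := le_trans (hψ0 (Classical.arbitrary _)) (hψB _)
    have hψb : ∀ ω, |ψ ω| ≤ B := fun ω => abs_le.2 ⟨by linarith [hψ0 ω], hψB ω⟩
    have hψintm : Integrable ψ μm := integrable_of_bound _ hψm.aestronglyMeasurable hψb
    have hgψint : Integrable (fun ω => density D μm μp ω * ψ ω) μp := by
      refine integrable_of_bound _ ((hgmeas.mul hψm).aestronglyMeasurable) (C := Cg * B) ?_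
      intro ω
      rw [abs_mul]
      exact mul_le_mul (hCgb ω) (hψb ω) (abs_nonneg _) hCg0
    have hstep : ∀ n : ℕ, 0 < n →
        ∫ ω, ψ ω ∂μm ≤ (∫ ω, density D μm μp ω * ψ ω ∂μp) + 1/(n:ℝ) := by
      intro n hn
      have hnpos : (0:ℝ) < (n:ℝ) := by exact_mod_cast hn
      set K : ℕ := n * ⌈B⌉₊ with hK
      set Uk : ℕ → Set (ι → Ω₀) := fun k => {ω | (k:ℝ)/(n:ℝ) < ψ ω} with hUk
      have hUmeas : ∀ k, MeasurableSet (Uk k) :=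
        fun k => measurableSet_lt measurable_const hψm
      have hUupper : ∀ k, ∀ ⦃a b : ι → Ω₀⦄, a ≤ b → a ∈ Uk k → b ∈ Uk k :=
        fun k a b hab ha => lt_of_lt_of_le ha (hψmono hab)
      set ψn : (ι → Ω₀) → ℝ :=
        fun ω => (∑ k ∈ Finset.Icc 1 K, (Uk k).indicator (fun _ => (1:ℝ)) ω) / (n:ℝ) with hψn
      have hψnmeas : Measurable ψn :=
        (Finset.measurable_sum _ fun k _ => measurable_const.indicator (hUmeas k)).div_const _
      -- counting identity
      have hsum : ∀ ω, (∑ k ∈ Finset.Icc 1 K, (Uk k).indicator (fun _ => (1:ℝ)) ω)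
          = (((Finset.Icc 1 K).filter (fun k : ℕ => (k:ℝ)/(n:ℝ) < ψ ω)).card : ℝ) := by
        intro ω
        rw [Finset.card_filter, Nat.cast_sum]
        refine Finset.sum_congr rfl fun k _ => ?_
        by_cases hk : (k:ℝ)/(n:ℝ) < ψ ω
        · rw [Set.indicator_of_mem (show ω ∈ Uk k from hk), if_pos hk, Nat.cast_one]
        · rw [Set.indicator_of_notMem (show ω ∉ Uk k from hk), if_neg hk, Nat.cast_zero]
      -- sandwich
      have hsand : ∀ ω, ψn ω ≤ ψ ω ∧ ψ ω ≤ ψn ω + 1/(n:ℝ) := by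
        intro ω
        have hψnval : ψn ω
            = ((((Finset.Icc 1 K).filter (fun k : ℕ => (k:ℝ)/(n:ℝ) < ψ ω)).card : ℕ) : ℝ) / (n:ℝ) := by
          show (∑ k ∈ Finset.Icc 1 K, (Uk k).indicator (fun _ => (1:ℝ)) ω) / (n:ℝ) = _
          rw [hsum ω]
        set cnt : ℕ := ((Finset.Icc 1 K).filter (fun k : ℕ => (k:ℝ)/(n:ℝ) < ψ ω)).card with hcnt
        have hlow : (cnt:ℝ) ≤ (n:ℝ) * ψ ω := by
          have hsubf : (Finset.Icc 1 K).filter (fun k : ℕ => (k:ℝ)/(n:ℝ) < ψ ω)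
              ⊆ Finset.Icc 1 ⌊(n:ℝ) * ψ ω⌋₊ := by
            intro k hk
            rw [Finset.mem_filter, Finset.mem_Icc] at hk
            obtain ⟨⟨hk1, _⟩, hklt⟩ := hk
            rw [Finset.mem_Icc]
            refine ⟨hk1, Nat.le_floor ?_⟩
            rw [div_lt_iff₀ hnpos] at hklt
            nlinarith
          calc (cnt:ℝ) ≤ ((Finset.Icc 1 ⌊(n:ℝ) * ψ ω⌋₊).card : ℝ) := by
                exact_mod_cast Finset.card_le_card hsubf
            _ = (⌊(n:ℝ) * ψ ω⌋₊ : ℝ) := by rw [Nat.card_Icc]; simp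
            _ ≤ (n:ℝ) * ψ ω := Nat.floor_le (mul_nonneg hnpos.le (hψ0 ω))
        have hhigh : (n:ℝ) * ψ ω ≤ (cnt:ℝ) + 1 := by
          by_contra hcon
          push_neg at hcon
          have hsub2 : Finset.Icc 1 (cnt + 1)
              ⊆ (Finset.Icc 1 K).filter (fun k : ℕ => (k:ℝ)/(n:ℝ) < ψ ω) := by
            intro k hk
            rw [Finset.mem_Icc] at hk
            obtain ⟨hk1, hk2⟩ := hk
            have hkr : (k:ℝ) ≤ (cnt:ℝ) + 1 := by exact_mod_cast hk2
            have hklt : (k:ℝ) < (n:ℝ) * ψ ω := lt_of_le_of_lt hkr hcon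
            have hKB : (n:ℝ) * ψ ω ≤ (K:ℝ) := by
              rw [hK]
              push_cast
              calc (n:ℝ) * ψ ω ≤ (n:ℝ) * B :=
                    mul_le_mul_of_nonneg_left (hψB ω) hnpos.le
                _ ≤ (n:ℝ) * (⌈B⌉₊ : ℝ) :=
                    mul_le_mul_of_nonneg_left (Nat.le_ceil B) hnpos.le
            have hkK : k ≤ K := by
              have hlt : (k:ℝ) < (K:ℝ) := lt_of_lt_of_le hklt hKB
              exact_mod_cast hlt.le
            rw [Finset.mem_filter, Finset.mem_Icc]
            exact ⟨⟨hk1, hkK⟩, by rwa [div_lt_iff₀ hnpos, mul_comm]⟩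
          have hcard := Finset.card_le_card hsub2
          rw [Nat.card_Icc] at hcard
          omega
        constructor
        · rw [hψnval, div_le_iff₀ hnpos]
          linarith [hlow]
        · rw [hψnval]
          rw [← add_div, le_div_iff₀ hnpos]
          linarith [hhigh]
      have hψn0 : ∀ ω, 0 ≤ ψn ω := by
        intro ω
        show 0 ≤ (∑ k ∈ Finset.Icc 1 K, (Uk k).indicator (fun _ => (1:ℝ)) ω) / (n:ℝ)
        refine div_nonneg (Finset.sum_nonneg fun k _ => ?_) hnpos.le
        exact Set.indicator_nonneg (fun _ _ => zero_le_one) ω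
      have hψnB : ∀ ω, |ψn ω| ≤ B :=
        fun ω => abs_le.2 ⟨by linarith [hψn0 ω], le_trans (hsand ω).1 (hψB ω)⟩
      have hψnintm : Integrable ψn μm := integrable_of_bound _ hψnmeas.aestronglyMeasurable hψnB
      have hgψnint : Integrable (fun ω => density D μm μp ω * ψn ω) μp := by
        refine integrable_of_bound _ ((hgmeas.mul hψnmeas).aestronglyMeasurable)
          (C := Cg * B) ?_
        intro ω
        rw [abs_mul]
        exact mul_le_mul (hCgb ω) (hψnB ω) (abs_nonneg _) hCg0
      -- step 1 : ∫ ψ dμm ≤ ∫ ψn dμm + 1/n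
      have h1 : ∫ ω, ψ ω ∂μm ≤ (∫ ω, ψn ω ∂μm) + 1/(n:ℝ) := by
        have hconst : ∫ ω, (ψn ω + 1/(n:ℝ)) ∂μm = (∫ ω, ψn ω ∂μm) + 1/(n:ℝ) := by
          rw [integral_add hψnintm (integrable_const _), integral_const, probReal_univ,
            one_smul]
        calc ∫ ω, ψ ω ∂μm ≤ ∫ ω, (ψn ω + 1/(n:ℝ)) ∂μm :=
              integral_mono hψintm (hψnintm.add (integrable_const _)) (fun ω => (hsand ω).2)
          _ = _ := hconst
      -- step 2 : ∫ ψn dμm ≤ ∫ g ψn dμp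
      have h2 : ∫ ω, ψn ω ∂μm ≤ ∫ ω, density D μm μp ω * ψn ω ∂μp := by
        have hLm : ∫ ω, ψn ω ∂μm
            = (∑ k ∈ Finset.Icc 1 K, (μm (Uk k)).toReal) / (n:ℝ) := by
          show ∫ ω, (∑ k ∈ Finset.Icc 1 K, (Uk k).indicator (fun _ => (1:ℝ)) ω) / (n:ℝ) ∂μm = _
          rw [integral_div]
          congr 1
          rw [integral_finset_sum _ (fun k _ =>
            (integrable_const (1:ℝ)).indicator (hUmeas k))]
          refine Finset.sum_congr rfl fun k _ => ?_
          rw [integral_indicator_const (1:ℝ) (hUmeas k)]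
          simp [Measure.real]
        have hRp : ∫ ω, density D μm μp ω * ψn ω ∂μp
            = (∑ k ∈ Finset.Icc 1 K,
                ∫ ω, density D μm μp ω * (Uk k).indicator (fun _ => (1:ℝ)) ω ∂μp) / (n:ℝ) := by
          have hptw : (fun ω => density D μm μp ω * ψn ω)
              = fun ω => (∑ k ∈ Finset.Icc 1 K,
                  density D μm μp ω * (Uk k).indicator (fun _ => (1:ℝ)) ω) / (n:ℝ) := by
            funext ω
            show density D μm μp ω
                * ((∑ k ∈ Finset.Icc 1 K, (Uk k).indicator (fun _ => (1:ℝ)) ω) / (n:ℝ)) = _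
            rw [mul_div_assoc', Finset.mul_sum]
          rw [hptw, integral_div]
          congr 1
          rw [integral_finset_sum _ (fun k _ => ?_)]
          · refine integrable_of_bound _ ((hgmeas.mul
              (measurable_const.indicator (hUmeas k))).aestronglyMeasurable) (C := Cg) ?_
            intro ω
            rw [abs_mul]
            calc |density D μm μp ω| * |(Uk k).indicator (fun _ => (1:ℝ)) ω|
                ≤ Cg * 1 := mul_le_mul (hCgb ω)
                  (abs_indicator_le zero_le_one (fun _ => by simp) ω) (abs_nonneg _) hCg0
              _ = Cg := mul_one _
        rw [hLm, hRp]
        gcongr with k hk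
        exact upper_set_ineq γ hmono μp μm hμp hμm D hac (hUmeas k) (hUupper k)
      -- step 3 : ∫ g ψn dμp ≤ ∫ g ψ dμp
      have h3 : ∫ ω, density D μm μp ω * ψn ω ∂μp ≤ ∫ ω, density D μm μp ω * ψ ω ∂μp :=
        integral_mono hgψnint hgψint (fun ω => mul_le_mul_of_nonneg_left (hsand ω).1 (hg0 ω))
      linarith
    refine le_of_forall_pos_le_add fun ε hε => ?_
    obtain ⟨n, hn⟩ := exists_nat_one_div_lt hε
    have hs := hstep (n + 1) (Nat.succ_pos n)
    have hcast : (1:ℝ)/(((n + 1 : ℕ)):ℝ) = 1/((n:ℝ) + 1) := by push_cast; ring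
    rw [hcast] at hs
    linarith [hn]
  -- translate back from the nonnegative case
  have hkey := key (fun ω => χ ω + C) (hχm.add measurable_const)
    (fun a b hab => by simpa using add_le_add_right (hχmono hab) C) (C + C)
    (fun ω => by
      have h := (abs_le.1 (hCb ω)).1
      show (0:ℝ) ≤ χ ω + C
      linarith)
    (fun ω => by
      have h := (abs_le.1 (hCb ω)).2
      show χ ω + C ≤ C + C
      linarith)
  have hχint : Integrable χ μm := integrable_of_bound _ hχm.aestronglyMeasurable hCb
  have hgχint : Integrable (fun ω => density D μm μp ω * χ ω) μp := by
    refine integrable_of_bound _ ((hgmeas.mul hχm).aestronglyMeasurable) (C := Cg * C) ?_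
    intro ω
    rw [abs_mul]
    exact mul_le_mul (hCgb ω) (hCb ω) (abs_nonneg _) hCg0
  have hL : ∫ ω, (χ ω + C) ∂μm = (∫ ω, χ ω ∂μm) + C := by
    rw [integral_add hχint (integrable_const C), integral_const, probReal_univ,
      one_smul]
  have hR : ∫ ω, density D μm μp ω * (χ ω + C) ∂μp
      = (∫ ω, density D μm μp ω * χ ω ∂μp) + C := by
    have hptw : (fun ω => density D μm μp ω * (χ ω + C))
        = fun ω => density D μm μp ω * χ ω + C * density D μm μp ω := by
      funext ω
      ring
    rw [hptw, integral_add hgχint (hgint.const_mul C), integral_const_mul, hg1, mul_one]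
  rw [hL, hR] at hkey
  linarith

end PBD
namespace PBD
open MeasureTheory Filter Topology
set_option linter.unusedSectionVars false
set_option maxHeartbeats 1000000

variable {ι : Type*} [Countable ι] {Ω₀ : Type*} [Fintype Ω₀] [MeasurableSpace Ω₀]
  [DiscreteMeasurableSpace Ω₀] [LinearOrder Ω₀] [BoundedOrder Ω₀]

/-- Abstract form of the final estimate. -/
lemma final_estimate [Nonempty ι] (γ : Specification ι Ω₀) (hmono : MonoPreserving γ)
    (μp μm : Measure (ι → Ω₀))
    (hμp : IsLimitWithBoundary γ (fun _ => (⊤ : Ω₀)) μp)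
    (hμm : IsLimitWithBoundary γ (fun _ => (⊥ : Ω₀)) μm)
    (D : Finset ι) (hac : restrictTo D μm ≪ restrictTo D μp)
    {h₁ h₂ : (ι → Ω₀) → ℝ} {Cf : ℝ}
    (hh₁dep : ∀ ω ω' : ι → Ω₀, (∀ x ∈ D, ω x = ω' x) → h₁ ω = h₁ ω')
    (hh₁m : Measurable h₁) (hh₁b : ∀ ω, |h₁ ω| ≤ Cf)
    (hh₂m : Measurable h₂) (hh₂mono : Monotone h₂) (hh₂b : ∀ ω, |h₂ ω| ≤ Cf)
    (h12 : ∀ ω, h₂ ω ≤ h₁ ω) :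
    0 ≤ ∫ ω, density D μm μp ω * (h₁ ω - h₂ ω) ∂μp ∧
      (∫ ω, density D μm μp ω * (h₁ ω - h₂ ω) ∂μp) ≤ ∫ ω, |h₁ ω - h₂ ω| ∂μm := by
  classical
  haveI := hμp.1
  haveI := hμm.1
  haveI : Nonempty Ω₀ := ⟨(⊥ : Ω₀)⟩
  obtain ⟨Cg, hCg0, hCgb⟩ := exists_bound_of_finiteRange (density_finiteRange D μm μp)
  have hgmeas : Measurable (density D μm μp) := measurable_density D μm μp
  have hgnn : ∀ ω, 0 ≤ density D μm μp ω := density_nonneg D μm μp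
  constructor
  · refine integral_nonneg fun ω => ?_
    exact mul_nonneg (hgnn ω) (sub_nonneg.2 (h12 ω))
  · have hint_gh1 : Integrable (fun ω => density D μm μp ω * h₁ ω) μp := by
      refine integrable_of_bound _ ((hgmeas.mul hh₁m).aestronglyMeasurable) (C := Cg * Cf) ?_
      intro ω
      rw [abs_mul]
      exact mul_le_mul (hCgb ω) (hh₁b ω) (abs_nonneg _) hCg0
    have hint_gh2 : Integrable (fun ω => density D μm μp ω * h₂ ω) μp := by
      refine integrable_of_bound _ ((hgmeas.mul hh₂m).aestronglyMeasurable) (C := Cg * Cf) ?_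
      intro ω
      rw [abs_mul]
      exact mul_le_mul (hCgb ω) (hh₂b ω) (abs_nonneg _) hCg0
    have hint_h1m : Integrable h₁ μm :=
      integrable_of_bound _ hh₁m.aestronglyMeasurable hh₁b
    have hint_h2m : Integrable h₂ μm :=
      integrable_of_bound _ hh₂m.aestronglyMeasurable hh₂b
    have hsplit : ∫ ω, density D μm μp ω * (h₁ ω - h₂ ω) ∂μp
        = (∫ ω, density D μm μp ω * h₁ ω ∂μp) - ∫ ω, density D μm μp ω * h₂ ω ∂μp := by
      rw [← integral_sub hint_gh1 hint_gh2]
      refine integral_congr_ae (Filter.Eventually.of_forall fun ω => ?_)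
      show density D μm μp ω * (h₁ ω - h₂ ω)
        = density D μm μp ω * h₁ ω - density D μm μp ω * h₂ ω
      ring
    have hA : ∫ ω, density D μm μp ω * h₁ ω ∂μp = ∫ ω, h₁ ω ∂μm :=
      transfer D μm μp hac hh₁dep
    have hB : ∫ ω, h₂ ω ∂μm ≤ ∫ ω, density D μm μp ω * h₂ ω ∂μp :=
      mono_ineq γ hmono μp μm hμp hμm D hac hh₂m hh₂mono hh₂b
    have hRHS : ∫ ω, |h₁ ω - h₂ ω| ∂μm = (∫ ω, h₁ ω ∂μm) - ∫ ω, h₂ ω ∂μm := by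
      rw [← integral_sub hint_h1m hint_h2m]
      refine integral_congr_ae (Filter.Eventually.of_forall fun ω => ?_)
      exact abs_of_nonneg (sub_nonneg.2 (h12 ω))
    rw [hsplit, hRHS, hA]
    linarith [hB]

end PBD

open PBD in
/-- Key estimate in the proof of Corollary r.cor1(a): for increasing local `f`,
`0 ≤ μ⁺[g_{Λ_M∖Λ}(γ^{M,+}_Λ f − γ_Λ f)] ≤ μ⁻(|γ^{M,+}_Λ f − γ_Λ f|)`. -/
theorem plus_boundary_density_estimate
    {Ω₀ : Type*} [Fintype Ω₀] [MeasurableSpace Ω₀] [DiscreteMeasurableSpace Ω₀]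
    [LinearOrder Ω₀] [BoundedOrder Ω₀] {d : ℕ}
    (γ : Specification (Site d) Ω₀) (hTI : TransInvSpec γ) (hmono : MonoPreserving γ)
    (μp μm : Measure (Site d → Ω₀))
    (hμp : IsLimitWithBoundary γ (fun _ => (⊤ : Ω₀)) μp)
    (hμm : IsLimitWithBoundary γ (fun _ => (⊥ : Ω₀)) μm)
    (Λ : Finset (Site d)) (M : ℕ) (hΛ : Λ ⊆ cube d M)
    (hac : restrictTo (cube d M \ Λ) μm ≪ restrictTo (cube d M \ Λ) μp)
    (f : (Site d → Ω₀) → ℝ) (hf : IsLocal f) (hfmono : Monotone f) :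
    0 ≤ ∫ ω, density (cube d M \ Λ) μm μp ω *
          (specInt γ Λ f (splice ((cube d M : Finset (Site d)) : Set (Site d)) ω
              (fun _ => (⊤ : Ω₀)))
            - specInt γ Λ f ω) ∂μp ∧
      (∫ ω, density (cube d M \ Λ) μm μp ω *
          (specInt γ Λ f (splice ((cube d M : Finset (Site d)) : Set (Site d)) ω
              (fun _ => (⊤ : Ω₀)))
            - specInt γ Λ f ω) ∂μp)
        ≤ ∫ ω, |specInt γ Λ f (splice ((cube d M : Finset (Site d)) : Set (Site d)) ω
              (fun _ => (⊤ : Ω₀)))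
            - specInt γ Λ f ω| ∂μm := by
  classical
  haveI : Nonempty Ω₀ := ⟨(⊥ : Ω₀)⟩
  obtain ⟨Δ, hΔ⟩ := hf
  have hfdep : ∀ ω ω' : Site d → Ω₀, (∀ x ∈ Δ, ω x = ω' x) → f ω = f ω' :=
    fun ω ω' h => eq_of_agree hΔ h
  have hfm : Measurable f := hΔ.mono (cylinderSigma_le _) le_rfl
  have hfr : (Set.range f).Finite := finiteRange_of_depends Δ hfdep
  obtain ⟨Cf, hCf0, hCfb⟩ := exists_bound_of_finiteRange hfr
  have hh₂m : Measurable (specInt γ Λ f) := measurable_specInt γ Λ hfm hfr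
  have hh₂mono : Monotone (specInt γ Λ f) := hmono Λ f hfm hfmono
  have hh₂b : ∀ ω, |specInt γ Λ f ω| ≤ Cf := abs_specInt_le γ Λ hCfb
  have hsp_ge : ∀ ω : Site d → Ω₀,
      ω ≤ splice ((cube d M : Finset (Site d)) : Set (Site d)) ω (fun _ => (⊤ : Ω₀)) := by
    intro ω x
    simp only [splice]
    split_ifs with hx
    · exact le_rfl
    · exact le_top
  have h12 : ∀ ω : Site d → Ω₀, specInt γ Λ f ω
      ≤ specInt γ Λ f (splice ((cube d M : Finset (Site d)) : Set (Site d)) ω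
          (fun _ => (⊤ : Ω₀))) :=
    fun ω => hh₂mono (hsp_ge ω)
  have hh₁dep : ∀ ω ω' : Site d → Ω₀, (∀ x ∈ cube d M \ Λ, ω x = ω' x) →
      specInt γ Λ f (splice ((cube d M : Finset (Site d)) : Set (Site d)) ω
          (fun _ => (⊤ : Ω₀)))
        = specInt γ Λ f (splice ((cube d M : Finset (Site d)) : Set (Site d)) ω'
          (fun _ => (⊤ : Ω₀))) := by
    intro ω ω' h
    refine specInt_eq_of_agree γ Λ f (fun x hx => ?_)
    simp only [splice]
    split_ifs with hcube
    · refine h x ?_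
      rw [Finset.mem_sdiff]
      exact ⟨by simpa using hcube, by simpa using hx⟩
    · rfl
  have hh₁m : Measurable (fun ω : Site d → Ω₀ =>
      specInt γ Λ f (splice ((cube d M : Finset (Site d)) : Set (Site d)) ω
        (fun _ => (⊤ : Ω₀)))) :=
    (measurable_cylinder_of_depends (cube d M \ Λ) hh₁dep).mono (cylinderSigma_le _) le_rfl
  have hh₁b : ∀ ω : Site d → Ω₀,
      |specInt γ Λ f (splice ((cube d M : Finset (Site d)) : Set (Site d)) ω
        (fun _ => (⊤ : Ω₀)))| ≤ Cf :=
    fun ω => hh₂b _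
  exact final_estimate γ hmono μp μm hμp hμm (cube d M \ Λ) hac
    hh₁dep hh₁m hh₁b hh₂m hh₂mono hh₂b h12

end
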